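/- Let X be a countably paracompact normal Hausdorff space. Let 𝒰 be an open set in the space L(X) with the Vietoris topology τ_V, and suppose 𝒰 contains (the graph of) some continuous function h : X → ℝ. Then there exist continuous functions f, g : X → ℝ with f < h < g such that h ∈ M_{f,g}⁺, the τ_V-closure of M_{f,g}⁺ in L(X) is contained in 𝒰, where M_{f,g} = {(x,y) ∈ X × ℝ : f(x) < y < g(x)} and M_{f,g}⁺ = {F ∈ L(X) : graph F ⊆ M_{f,g}}. -/

import Mathlib

open Set Topology TopologicalSpace

/-- The set of values of a set-valued map (identified with its graph) at a point. -/
def valuesAt {X : Type*} (F : Set (X × ℝ)) (x : X) : Set ℝ := {y | (x, y) ∈ F}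

/-- A set-valued map (identified with its graph) is cusco: upper semicontinuous at every
point, with nonempty compact convex values. -/
def IsCusco {X : Type*} [TopologicalSpace X] (F : Set (X × ℝ)) : Prop :=
  (∀ x : X, ∀ V : Set ℝ, IsOpen V → valuesAt F x ⊆ V →
    ∃ U : Set X, IsOpen U ∧ x ∈ U ∧ ∀ u ∈ U, valuesAt F u ⊆ V) ∧
  (∀ x : X, (valuesAt F x).Nonempty ∧ IsCompact (valuesAt F x) ∧ Convex ℝ (valuesAt F x))

/-- A minimal cusco map, i.e. a cusco map containing no proper cusco submap. -/
def IsMinimalCusco {X : Type*} [TopologicalSpace X] (F : Set (X × ℝ)) : Prop :=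
  IsCusco F ∧ ∀ G : Set (X × ℝ), IsCusco G → G ⊆ F → G = F

/-- `L(X)`: all cusco maps from `X` to `ℝ`. -/
def LSet (X : Type*) [TopologicalSpace X] : Set (Set (X × ℝ)) := {F | IsCusco F}

/-- `L₀(X)`: cusco maps that are single-valued at each isolated point. -/
def L0Set (X : Type*) [TopologicalSpace X] : Set (Set (X × ℝ)) :=
  {F | IsCusco F ∧ ∀ x : X, IsOpen ({x} : Set X) → ∃ y : ℝ, valuesAt F x = {y}}

/-- `MC(X)`: all minimal cusco maps from `X` to `ℝ`. -/
def MCSet (X : Type*) [TopologicalSpace X] : Set (Set (X × ℝ)) := {F | IsMinimalCusco F}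

/-- The upper Vietoris topology on a family of subsets of `X × ℝ`. -/
def upperVietoris {X : Type*} [TopologicalSpace X] (S : Set (Set (X × ℝ))) :
    TopologicalSpace S :=
  .generateFrom {U | ∃ W : Set (X × ℝ), IsOpen W ∧ U = {A : S | (A : Set (X × ℝ)) ⊆ W}}

/-- The Vietoris topology on a family of subsets of `X × ℝ`. -/
def vietoris {X : Type*} [TopologicalSpace X] (S : Set (Set (X × ℝ))) :
    TopologicalSpace S :=
  .generateFrom
    ({U | ∃ W : Set (X × ℝ), IsOpen W ∧ U = {A : S | (A : Set (X × ℝ)) ⊆ W}} ∪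
     {U | ∃ W : Set (X × ℝ), IsOpen W ∧ U = {A : S | ((A : Set (X × ℝ)) ∩ W).Nonempty}})

/-- The graph of a function `X → ℝ`. -/
def graphOf {X : Type*} (f : X → ℝ) : Set (X × ℝ) := {p | p.2 = f p.1}

/-- `X` is countably compact: every countable open cover has a finite subcover. -/
def CountablyCompact (X : Type*) [TopologicalSpace X] : Prop :=
  ∀ U : ℕ → Set X, (∀ n, IsOpen (U n)) → (⋃ n, U n) = Set.univ →
    ∃ t : Finset ℕ, (⋃ n ∈ t, U n) = Set.univ

/-- `X` is countably paracompact: every countable open cover has a locally finite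
open refinement. -/
def CountablyParacompact (X : Type*) [TopologicalSpace X] : Prop :=
  ∀ U : ℕ → Set X, (∀ n, IsOpen (U n)) → (⋃ n, U n) = Set.univ →
    ∃ (ι : Type) (V : ι → Set X), (∀ i, IsOpen (V i)) ∧ (⋃ i, V i) = Set.univ ∧
      LocallyFinite V ∧ ∀ i, ∃ n, V i ⊆ U n

/-- Let `X` be countably paracompact, normal and Hausdorff, let `𝒰` be open in
`(L(X), τ_V)` and contain the graph of a continuous `h : X → ℝ`. Then there are
continuous `f, g` with `f < h < g` such that `h ∈ M_{f,g}⁺` and the `τ_V`-closure of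
`M_{f,g}⁺` in `L(X)` is contained in `𝒰`, where `M_{f,g} = {(x,y) | f x < y < g x}`. -/
lemma exists_eps {X : Type*} [TopologicalSpace X] [NormalSpace X]
    (hcp : CountablyParacompact X) (h : X → ℝ) (hc : Continuous h)
    (W : Set (X × ℝ)) (hW : IsOpen W) (hsub : ∀ x, (x, h x) ∈ W) :
    ∃ ε : X → ℝ, Continuous ε ∧ (∀ x, 0 < ε x) ∧
      ∀ x y, |y - h x| ≤ ε x → (x, y) ∈ W := by
  classical
  set G : ℕ → Set X := fun n =>
    {x | ∃ U : Set X, IsOpen U ∧ x ∈ U ∧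
      ∀ u ∈ U, ∀ y : ℝ, |y - h u| ≤ 1 / (n + 1 : ℝ) → (u, y) ∈ W} with hG
  have hGopen : ∀ n, IsOpen (G n) := by
    intro n
    rw [isOpen_iff_forall_mem_open]
    rintro x ⟨U, hUo, hxU, hU⟩
    exact ⟨U, fun u hu => ⟨U, hUo, hu, hU⟩, hUo, hxU⟩
  have hGcover : (⋃ n, G n) = Set.univ := by
    rw [eq_univ_iff_forall]
    intro x
    rcases isOpen_prod_iff.1 hW x (h x) (hsub x) with ⟨u, v, hu, hv, hxu, hxv, huv⟩
    rcases Metric.isOpen_iff.1 hv (h x) hxv with ⟨δ, hδ, hball⟩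
    rcases exists_nat_one_div_lt (by linarith : (0:ℝ) < δ / 4) with ⟨n, hn⟩
    refine mem_iUnion.2 ⟨n, u ∩ h ⁻¹' Metric.ball (h x) (δ / 4),
      hu.inter (Metric.isOpen_ball.preimage hc), ⟨hxu, by simp only [mem_preimage, Metric.mem_ball, dist_self]; linarith⟩,
      ?_⟩
    rintro z ⟨hzu, hzb⟩ y hy
    apply huv
    refine ⟨hzu, hball ?_⟩
    have hzb' : dist (h z) (h x) < δ / 4 := Metric.mem_ball.1 hzb
    show y ∈ Metric.ball (h x) δ
    rw [Metric.mem_ball]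
    have h1 : |y - h z| < δ / 4 := lt_of_le_of_lt hy hn
    have h2 : |h z - h x| < δ / 4 := by rwa [Real.dist_eq] at hzb'
    calc dist y (h x) = |y - h x| := Real.dist_eq y (h x)
      _ ≤ |y - h z| + |h z - h x| := abs_sub_le _ _ _
      _ < δ := by linarith
  obtain ⟨ι, V, hVo, hVc, hVlf, hVref⟩ := hcp G hGopen hGcover
  choose nn hnn using hVref
  obtain ⟨bc, hbc⟩ := BumpCovering.exists_isSubordinate_of_locallyFinite isClosed_univ V hVo hVlf
    (by rw [hVc])
  set ρ := bc.toPartitionOfUnity with hρ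
  have hρsub : ρ.IsSubordinate V := hbc.toPartitionOfUnity
  set c : ι → ℝ := fun i => 1 / (nn i + 1 : ℝ) with hcdef
  have hcpos : ∀ i, 0 < c i := fun i => by positivity
  set ε : X → ℝ := fun x => ∑ᶠ i, ρ i x * c i with hεdef
  have hT : ∀ x : X, (Function.support fun i => ρ i x).Finite := fun x =>
    ρ.locallyFinite.point_finite x
  have hsum1 : ∀ x : X, ∑ᶠ i, ρ i x = 1 := fun x => ρ.sum_eq_one (mem_univ x)
  have hTsub : ∀ x : X, (Function.support fun i => ρ i x * c i) ⊆ Function.support fun i => ρ i x := by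
    intro x i hi
    simp only [Function.mem_support] at hi ⊢
    intro h0; apply hi; rw [h0, zero_mul]
  have hεeq : ∀ x : X, ε x = ∑ i ∈ (hT x).toFinset, ρ i x * c i := fun x =>
    finsum_eq_finset_sum_of_support_subset _ (by simp only [Set.Finite.coe_toFinset]; exact hTsub x)
  have hsum1' : ∀ x : X, ∑ i ∈ (hT x).toFinset, ρ i x = 1 := fun x => by
    rw [← hsum1 x]
    exact (finsum_eq_finset_sum_of_support_subset _ (by simp)).symm
  have hTne : ∀ x : X, ((hT x).toFinset).Nonempty := by
    intro x
    rcases Finset.eq_empty_or_nonempty (hT x).toFinset with he | hne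
    · exfalso; have := hsum1' x; rw [he, Finset.sum_empty] at this; exact zero_ne_one this
    · exact hne
  have hεpos : ∀ x, 0 < ε x := by
    intro x
    obtain ⟨i₀, hi₀⟩ := hTne x
    have hρi₀ : 0 < ρ i₀ x := by
      have := (hT x).mem_toFinset.1 hi₀
      exact lt_of_le_of_ne (ρ.nonneg i₀ x) (Ne.symm this)
    calc (0:ℝ) < ρ i₀ x * c i₀ := mul_pos hρi₀ (hcpos i₀)
      _ ≤ ε x := by
          rw [hεeq]
          exact Finset.single_le_sum
            (fun i _ => mul_nonneg (ρ.nonneg i x) (hcpos i).le) hi₀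
  refine ⟨ε, ?_, hεpos, ?_⟩
  · apply continuous_finsum (fun i => ((ρ i).continuous).mul continuous_const)
    apply ρ.locallyFinite.subset
    intro i x hx
    simp only [Function.mem_support] at hx ⊢
    intro h0; apply hx; rw [Pi.mul_apply, h0, zero_mul]
  · intro x y hy
    obtain ⟨imax, himax, hmax⟩ := Finset.exists_max_image (hT x).toFinset c (hTne x)
    have hεle : ε x ≤ c imax := by
      rw [hεeq]
      calc ∑ i ∈ (hT x).toFinset, ρ i x * c i
          ≤ ∑ i ∈ (hT x).toFinset, ρ i x * c imax :=
            Finset.sum_le_sum fun i hi =>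
              mul_le_mul_of_nonneg_left (hmax i hi) (ρ.nonneg i x)
        _ = c imax := by rw [← Finset.sum_mul, hsum1' x, one_mul]
    have hxV : x ∈ V imax := by
      have : x ∈ Function.support (ρ imax) := (hT x).mem_toFinset.1 himax
      exact (hρsub imax) (subset_tsupport _ this)
    obtain ⟨U, _, hxU, hU⟩ := hnn imax hxV
    exact hU x hxU y (le_trans hy (le_trans hεle le_rfl))

theorem exists_Mfg_closure_subset {X : Type*} [TopologicalSpace X] [T2Space X]
    [NormalSpace X] (hcp : CountablyParacompact X)
    (𝒰 : Set (LSet X)) (hU : IsOpen[vietoris (LSet X)] 𝒰)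
    (h : X → ℝ) (hc : Continuous h) (hmemL : graphOf h ∈ LSet X)
    (hmem : (⟨graphOf h, hmemL⟩ : LSet X) ∈ 𝒰) :
    ∃ f g : X → ℝ, Continuous f ∧ Continuous g ∧
      (∀ x, f x < h x) ∧ (∀ x, h x < g x) ∧
      graphOf h ⊆ {p : X × ℝ | f p.1 < p.2 ∧ p.2 < g p.1} ∧
      @closure _ (vietoris (LSet X))
          {F : LSet X | (F : Set (X × ℝ)) ⊆ {p : X × ℝ | f p.1 < p.2 ∧ p.2 < g p.1}} ⊆
        𝒰 := by
  classical
  letI tV : TopologicalSpace (LSet X) := vietoris (LSet X)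
  set S1 : Set (Set (LSet X)) :=
    {U | ∃ W : Set (X × ℝ), IsOpen W ∧ U = {A : LSet X | (A : Set (X × ℝ)) ⊆ W}} with hS1
  set S2 : Set (Set (LSet X)) :=
    {U | ∃ W : Set (X × ℝ), IsOpen W ∧
      U = {A : LSet X | ((A : Set (X × ℝ)) ∩ W).Nonempty}} with hS2
  have hgen : tV = TopologicalSpace.generateFrom (S1 ∪ S2) := rfl
  have hbasis := TopologicalSpace.isTopologicalBasis_of_subbasis hgen
  obtain ⟨t, ht, hHt, htU⟩ := hbasis.exists_subset_of_mem_open hmem hU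
  obtain ⟨fs, ⟨hfsfin, hfssub⟩, rfl⟩ := ht
  have hmemall : ∀ s ∈ fs, (⟨graphOf h, hmemL⟩ : LSet X) ∈ s := fun s hs => hHt s hs
  have key : ∀ s ∈ fs, ∃ (Wd : Set (X × ℝ)) (δ : ℝ), IsOpen Wd ∧ 0 < δ ∧
      ((s = {A : LSet X | (A : Set (X × ℝ)) ⊆ Wd}) ∨
       ((∃ x : X, ∀ y : ℝ, |y - h x| ≤ δ → (x, y) ∈ Wd) ∧
        s = {A : LSet X | ((A : Set (X × ℝ)) ∩ Wd).Nonempty})) := by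
    intro s hs
    rcases hfssub hs with h1 | h2
    · obtain ⟨W, hWo, rfl⟩ := h1
      exact ⟨W, 1, hWo, one_pos, Or.inl rfl⟩
    · obtain ⟨W, hWo, rfl⟩ := h2
      have hne : (graphOf h ∩ W).Nonempty := hmemall _ hs
      obtain ⟨p, hp1, hp2⟩ := hne
      have hph : p.2 = h p.1 := hp1
      have hpW : (p.1, h p.1) ∈ W := by rw [← hph]; exact hp2
      rcases isOpen_prod_iff.1 hWo p.1 (h p.1) hpW with ⟨u, v, hu, hv, hxu, hxv, huv⟩
      rcases Metric.isOpen_iff.1 hv (h p.1) hxv with ⟨δ, hδ, hball⟩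
      refine ⟨W, δ / 2, hWo, by linarith, Or.inr ⟨⟨p.1, fun y hy => ?_⟩, rfl⟩⟩
      apply huv
      refine ⟨hxu, hball ?_⟩
      show dist y (h p.1) < δ
      rw [Real.dist_eq]
      have : |y - h p.1| ≤ δ / 2 := hy
      linarith
  choose! Wd δd hWo hδd halt using key
  set Uf : Set (LSet X) → Set (X × ℝ) := fun s =>
    if s = {A : LSet X | (A : Set (X × ℝ)) ⊆ Wd s} then Wd s else Set.univ with hUf
  set Wup : Set (X × ℝ) := ⋂ s ∈ fs, Uf s with hWup
  have hWupopen : IsOpen Wup := by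
    apply hfsfin.isOpen_biInter
    intro s hs
    by_cases hcase : s = {A : LSet X | (A : Set (X × ℝ)) ⊆ Wd s}
    · simp only [hUf, if_pos hcase]; exact hWo s hs
    · simp only [hUf, if_neg hcase]; exact isOpen_univ
  have hhWup : ∀ x, (x, h x) ∈ Wup := by
    intro x
    rw [hWup, Set.mem_iInter₂]
    intro s hs
    by_cases hcase : s = {A : LSet X | (A : Set (X × ℝ)) ⊆ Wd s}
    · simp only [hUf, if_pos hcase]
      have hH : (⟨graphOf h, hmemL⟩ : LSet X) ∈ s := hmemall s hs
      rw [hcase] at hH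
      exact hH (show ((x, h x) : X × ℝ) ∈ graphOf h from rfl)
    · simp only [hUf, if_neg hcase]; exact Set.mem_univ _
  obtain ⟨ε, hεc, hεpos, hεprop⟩ := exists_eps hcp h hc Wup hWupopen hhWup
  set D : Set ℝ := insert (1 : ℝ) (δd '' fs) with hD
  have hDfin : D.Finite := ((hfsfin.image δd).insert 1)
  have hDne : D.Nonempty := ⟨1, Set.mem_insert _ _⟩
  set c : ℝ := sInf D with hcD
  have hc0 : 0 < c := by
    have hmem' : c ∈ D := hDne.csInf_mem hDfin
    rcases hmem' with h1 | h2
    · rw [h1]; exact one_pos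
    · obtain ⟨s, hs, hEq⟩ := h2; exact hEq ▸ hδd s hs
  have hcle : ∀ s ∈ fs, c ≤ δd s := fun s hs =>
    csInf_le hDfin.bddBelow (Set.mem_insert_of_mem _ ⟨s, hs, rfl⟩)
  set ε' : X → ℝ := fun x => min (ε x) c with hε'
  have hε'c : Continuous ε' := hεc.min continuous_const
  have hε'pos : ∀ x, 0 < ε' x := fun x => lt_min (hεpos x) hc0
  refine ⟨fun x => h x - ε' x, fun x => h x + ε' x, hc.sub hε'c, hc.add hε'c,
    fun x => by have := hε'pos x; show h x - ε' x < h x; linarith,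
    fun x => by have := hε'pos x; show h x < h x + ε' x; linarith,
    ?_, ?_⟩
  · intro p hp
    have hph : p.2 = h p.1 := hp
    have := hε'pos p.1
    constructor <;> (simp only [Set.mem_setOf_eq]; rw [hph]) <;> linarith
  · set Mset : Set (X × ℝ) :=
      {p : X × ℝ | (fun x => h x - ε' x) p.1 < p.2 ∧ p.2 < (fun x => h x + ε' x) p.1} with hMset
    set K : Set (X × ℝ) := {p : X × ℝ | |p.2 - h p.1| ≤ ε' p.1} with hK
    have hKclosed : IsClosed K :=
      isClosed_le ((continuous_snd.sub (hc.comp continuous_fst)).abs)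
        (hε'c.comp continuous_fst)
    have hMK : Mset ⊆ K := by
      rintro p ⟨h1, h2⟩
      simp only [hK, Set.mem_setOf_eq] at h1 h2 ⊢
      rw [abs_le]
      constructor <;> linarith
    intro F hF
    have hFK : (F : Set (X × ℝ)) ⊆ K := by
      by_contra hcon
      obtain ⟨p, hpF, hpK⟩ := Set.not_subset.1 hcon
      set N : Set (LSet X) := {A : LSet X | ((A : Set (X × ℝ)) ∩ Kᶜ).Nonempty} with hN
      have hNopen : IsOpen N :=
        TopologicalSpace.isOpen_generateFrom_of_mem
          (Or.inr ⟨Kᶜ, hKclosed.isOpen_compl, rfl⟩)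
      obtain ⟨A, hAN, hAM⟩ := mem_closure_iff.1 hF N hNopen ⟨p, hpF, hpK⟩
      obtain ⟨q, hq1, hq2⟩ := hAN
      exact hq2 (hMK (hAM hq1))
    apply htU
    rw [Set.mem_sInter]
    intro s hs
    rcases halt s hs with heq | ⟨⟨x₀, hx₀⟩, heq⟩
    · rw [heq]
      intro p hp
      have hpK : p ∈ K := hFK hp
      have h1 : |p.2 - h p.1| ≤ ε p.1 := le_trans hpK (min_le_left _ _)
      have h2 : p ∈ Wup := by
        have := hεprop p.1 p.2 h1
        simpa using this
      have h3 : Wup ⊆ Uf s := Set.biInter_subset_of_mem hs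
      have h4 : Uf s = Wd s := if_pos heq
      rw [← h4]; exact h3 h2
    · rw [heq]
      obtain ⟨⟨y, hy⟩, _, _⟩ := (F.2 : IsCusco (F : Set (X × ℝ))).2 x₀
      refine ⟨(x₀, y), hy, ?_⟩
      apply hx₀
      have hK' : ((x₀, y) : X × ℝ) ∈ K := hFK hy
      have : |y - h x₀| ≤ ε' x₀ := hK'
      exact le_trans this (le_trans (min_le_right _ _) (hcle s hs))
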